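/- Theorem 2.1, part 3 (finiteness of the path sampling integral). Let π be a probability measure on Θ such that (i) the function θ ↦ Q(θ,Y) is π-integrable, and (ii) there exists M < ∞ with f(Y|θ,t) ≤ M for all t ∈ [0,1] and π-almost every θ. Then z_t > 0 for all t ∈ [0,1], the expected score t ↦ E_t(U) = (∫_Θ U(θ,Y,t) f(Y|θ,t) dπ(θ)) / z_t is continuous on [0,1], and consequently the path sampling integral ∫₀¹ E_t(U) dt exists and is finite. -/

import Mathlib

/-!
STATEMENT 5 (Theorem 2.1, part 3): under integrability of Q and a.e. boundedness of the
path likelihood on [0,1], z_t > 0 for all t ∈ [0,1], the expected score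
t ↦ E_t(U) = (∫ U(θ,Y,t) f(Y|θ,t) dπ(θ)) / z_t is continuous on [0,1], and consequently
the path sampling integral ∫₀¹ E_t(U) dt exists and is finite.
-/

open MeasureTheory Real Filter Set

/-- The parameter space Θ of a factor model with `p` outcomes, `k+1` factors and `n`
observations: loadings Λ ∈ ℝ^{p×(k+1)}, variances σ² ∈ (0,∞)^p and latent factors
η = (η₁,…,η_n), ηᵢ ∈ ℝ^{k+1}. -/
abbrev FactorParam (p k n : ℕ) : Type :=
  Matrix (Fin p) (Fin (k + 1)) ℝ × {σ : Fin p → ℝ // ∀ j, 0 < σ j} ×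
    (Fin n → Fin (k + 1) → ℝ)

/-- Λ_t : the matrix obtained from Λ by multiplying its last column by `t` (PAMP). -/
def pathLam {p k : ℕ} (t : ℝ) (Λ : Matrix (Fin p) (Fin (k + 1)) ℝ) :
    Matrix (Fin p) (Fin (k + 1)) ℝ :=
  fun j l => if l = Fin.last k then t * Λ j l else Λ j l

/-- The factor model likelihood f(Y|θ) = ∏ᵢ∏ⱼ (2πσⱼ²)^{-1/2} exp(−(y_{ij} − (Ληᵢ)_j)²/(2σⱼ²)). -/
noncomputable def lik {p k n : ℕ} (Y : Fin n → Fin p → ℝ) (θ : FactorParam p k n) : ℝ :=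
  ∏ i : Fin n, ∏ j : Fin p,
    (2 * π * θ.2.1.1 j) ^ (-(1 : ℝ) / 2) *
      Real.exp (-(Y i j - ∑ l, θ.1 j l * θ.2.2 i l) ^ 2 / (2 * θ.2.1.1 j))

/-- The likelihood along the parametric arithmetic mean path: f(Y|θ,t) = f(Y|(Λ_t,σ²,η)). -/
noncomputable def pathLik {p k n : ℕ} (Y : Fin n → Fin p → ℝ) (θ : FactorParam p k n)
    (t : ℝ) : ℝ :=
  lik Y (pathLam t θ.1, θ.2)

/-- The score function U(θ,Y,t) = ∑ᵢ∑ⱼ (y_{ij} − (Λ_t ηᵢ)_j) σⱼ^{−2} Λ_{jk} η_{ik}. -/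
noncomputable def scoreU {p k n : ℕ} (Y : Fin n → Fin p → ℝ) (θ : FactorParam p k n)
    (t : ℝ) : ℝ :=
  ∑ i : Fin n, ∑ j : Fin p,
    (Y i j - ∑ l, pathLam t θ.1 j l * θ.2.2 i l) * (θ.2.1.1 j)⁻¹ *
      (θ.1 j (Fin.last k) * θ.2.2 i (Fin.last k))

/-- The dominating function Q(θ,Y), free of t. -/
noncomputable def Qbound {p k n : ℕ} (Y : Fin n → Fin p → ℝ) (θ : FactorParam p k n) : ℝ :=
  ∑ i : Fin n, ∑ j : Fin p,
    (|Y i j| + ∑ l, |θ.1 j l| * |θ.2.2 i l|) * (θ.2.1.1 j)⁻¹ *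
      (|θ.1 j (Fin.last k)| * |θ.2.2 i (Fin.last k)|)

/-- The Borel-type product σ-algebra on the space of loading matrices. -/
instance {p k : ℕ} : MeasurableSpace (Matrix (Fin p) (Fin (k + 1)) ℝ) :=
  MeasurableSpace.pi

lemma meas_Lam {p k n : ℕ} (j : Fin p) (l : Fin (k+1)) :
    Measurable (fun θ : FactorParam p k n => θ.1 j l) := by
  have h1 : Measurable (fun θ : FactorParam p k n => θ.1 j) :=
    (measurable_fst : Measurable fun θ : FactorParam p k n => θ.1).eval
  exact h1.eval

lemma meas_sigma {p k n : ℕ} (j : Fin p) :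
    Measurable (fun θ : FactorParam p k n => θ.2.1.1 j) :=
  (measurable_pi_apply j).comp (measurable_subtype_coe.comp (measurable_fst.comp measurable_snd))

lemma meas_eta {p k n : ℕ} (i : Fin n) (l : Fin (k+1)) :
    Measurable (fun θ : FactorParam p k n => θ.2.2 i l) := by
  have h0 : Measurable (fun θ : FactorParam p k n => θ.2.2) :=
    measurable_snd.comp measurable_snd
  exact h0.eval.eval

lemma meas_pathLam {p k n : ℕ} (t : ℝ) (j : Fin p) (l : Fin (k+1)) :
    Measurable (fun θ : FactorParam p k n => pathLam t θ.1 j l) := by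
  unfold pathLam
  split_ifs
  · exact measurable_const.mul (meas_Lam j l)
  · exact meas_Lam j l

lemma measurable_pathLik {p k n : ℕ} (Y : Fin n → Fin p → ℝ) (t : ℝ) :
    Measurable (fun θ : FactorParam p k n => pathLik Y θ t) := by
  unfold pathLik lik
  apply Finset.measurable_prod; intro i _
  apply Finset.measurable_prod; intro j _
  apply Measurable.mul
  · have heq : (fun θ : FactorParam p k n => (2 * π * θ.2.1.1 j) ^ (-(1:ℝ)/2))
        = fun θ => Real.exp (Real.log (2 * π * θ.2.1.1 j) * (-(1:ℝ)/2)) := by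
      funext θ
      exact Real.rpow_def_of_pos (by have := θ.2.1.2 j; positivity) _
    rw [heq]
    exact (((Real.measurable_log.comp (measurable_const.mul (meas_sigma j))).mul
      measurable_const)).exp
  · apply Measurable.exp
    apply Measurable.div
    · apply Measurable.neg
      apply Measurable.pow _ measurable_const
      exact measurable_const.sub
        (Finset.measurable_sum _ (fun l _ => (meas_pathLam t j l).mul (meas_eta i l)))
    · exact measurable_const.mul (meas_sigma j)

lemma measurable_scoreU {p k n : ℕ} (Y : Fin n → Fin p → ℝ) (t : ℝ) :
    Measurable (fun θ : FactorParam p k n => scoreU Y θ t) := by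
  unfold scoreU
  apply Finset.measurable_sum; intro i _
  apply Finset.measurable_sum; intro j _
  exact ((measurable_const.sub
      (Finset.measurable_sum _ (fun l _ => (meas_pathLam t j l).mul (meas_eta i l)))).mul
      (meas_sigma j).inv).mul ((meas_Lam j (Fin.last k)).mul (meas_eta i (Fin.last k)))
-- positivity, bounds, continuity in t, main theorem
lemma pathLik_pos {p k n : ℕ} (Y : Fin n → Fin p → ℝ) (θ : FactorParam p k n) (t : ℝ) :
    0 < pathLik Y θ t := by
  unfold pathLik lik
  apply Finset.prod_pos; intro i _
  apply Finset.prod_pos; intro j _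
  have h : 0 < 2 * π * θ.2.1.1 j := by
    have := θ.2.1.2 j; positivity
  exact mul_pos (Real.rpow_pos_of_pos h _) (Real.exp_pos _)

lemma abs_pathLam_le {p k : ℕ} {t : ℝ} (ht : t ∈ Set.Icc (0:ℝ) 1)
    (Λ : Matrix (Fin p) (Fin (k+1)) ℝ) (j : Fin p) (l : Fin (k+1)) :
    |pathLam t Λ j l| ≤ |Λ j l| := by
  unfold pathLam
  split_ifs
  · rw [abs_mul]
    calc |t| * |Λ j l| ≤ 1 * |Λ j l| := by
          apply mul_le_mul_of_nonneg_right _ (abs_nonneg _)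
          rw [abs_le]; exact ⟨by linarith [ht.1], ht.2⟩
      _ = |Λ j l| := one_mul _
  · exact le_refl _

lemma abs_scoreU_le {p k n : ℕ} (Y : Fin n → Fin p → ℝ) (θ : FactorParam p k n) {t : ℝ}
    (ht : t ∈ Set.Icc (0:ℝ) 1) : |scoreU Y θ t| ≤ Qbound Y θ := by
  unfold scoreU Qbound
  refine (Finset.abs_sum_le_sum_abs _ _).trans (Finset.sum_le_sum fun i _ => ?_)
  refine (Finset.abs_sum_le_sum_abs _ _).trans (Finset.sum_le_sum fun j _ => ?_)
  have hσ : 0 < (θ.2.1.1 j)⁻¹ := inv_pos.2 (θ.2.1.2 j)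
  rw [abs_mul, abs_mul, abs_mul, abs_of_pos hσ]
  have h1 : |Y i j - ∑ l, pathLam t θ.1 j l * θ.2.2 i l|
      ≤ |Y i j| + ∑ l, |θ.1 j l| * |θ.2.2 i l| := by
    refine (abs_sub _ _).trans (add_le_add (le_refl _) ?_)
    refine (Finset.abs_sum_le_sum_abs _ _).trans (Finset.sum_le_sum fun l _ => ?_)
    rw [abs_mul]
    exact mul_le_mul_of_nonneg_right (abs_pathLam_le ht θ.1 j l) (abs_nonneg _)
  gcongr

lemma Qbound_nonneg {p k n : ℕ} (Y : Fin n → Fin p → ℝ) (θ : FactorParam p k n) :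
    0 ≤ Qbound Y θ :=
  (abs_nonneg _).trans (abs_scoreU_le Y θ (t := 0) ⟨le_refl 0, zero_le_one⟩)

lemma cont_sum_t {p k n : ℕ} (θ : FactorParam p k n) (i : Fin n) (j : Fin p) :
    Continuous (fun t : ℝ => ∑ l, pathLam t θ.1 j l * θ.2.2 i l) := by
  apply continuous_finset_sum; intro l _
  unfold pathLam
  split_ifs
  · exact (continuous_id.mul continuous_const).mul continuous_const
  · exact continuous_const

lemma cont_pathLik_t {p k n : ℕ} (Y : Fin n → Fin p → ℝ) (θ : FactorParam p k n) :
    Continuous (fun t : ℝ => pathLik Y θ t) := by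
  unfold pathLik lik
  dsimp only
  apply continuous_finset_prod; intro i _
  apply continuous_finset_prod; intro j _
  have hS := cont_sum_t θ i j
  have h2 : Continuous fun t : ℝ =>
      -(Y i j - ∑ l, pathLam t θ.1 j l * θ.2.2 i l) ^ 2 / (2 * θ.2.1.1 j) :=
    ((continuous_const.sub hS).pow 2).neg.div_const _
  exact continuous_const.mul (Real.continuous_exp.comp h2)

lemma cont_scoreU_t {p k n : ℕ} (Y : Fin n → Fin p → ℝ) (θ : FactorParam p k n) :
    Continuous (fun t : ℝ => scoreU Y θ t) := by
  unfold scoreU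
  apply continuous_finset_sum; intro i _
  apply continuous_finset_sum; intro j _
  exact ((continuous_const.sub (cont_sum_t θ i j)).mul continuous_const).mul continuous_const

theorem path_sampling_integral_finite {p k n : ℕ} (Y : Fin n → Fin p → ℝ)
    (P : MeasureTheory.Measure (FactorParam p k n)) [MeasureTheory.IsProbabilityMeasure P]
    (hQ : MeasureTheory.Integrable (fun θ => Qbound Y θ) P)
    (M : ℝ) (hM : ∀ᵐ θ ∂P, ∀ t ∈ Set.Icc (0 : ℝ) 1, pathLik Y θ t ≤ M) :
    (∀ t ∈ Set.Icc (0 : ℝ) 1, 0 < ∫ θ, pathLik Y θ t ∂P) ∧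
      ContinuousOn
        (fun t : ℝ => (∫ θ, scoreU Y θ t * pathLik Y θ t ∂P) / ∫ θ, pathLik Y θ t ∂P)
        (Set.Icc (0 : ℝ) 1) ∧
      IntervalIntegrable
        (fun t : ℝ => (∫ θ, scoreU Y θ t * pathLik Y θ t ∂P) / ∫ θ, pathLik Y θ t ∂P)
        MeasureTheory.volume 0 1 := by
  haveI : (ae P).NeBot := ae_neBot.2 (IsProbabilityMeasure.ne_zero P)
  -- integrability of the path likelihood
  have hInt : ∀ t ∈ Set.Icc (0:ℝ) 1, Integrable (fun θ => pathLik Y θ t) P := by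
    intro t ht
    refine (integrable_const M).mono' (measurable_pathLik Y t).aestronglyMeasurable ?_
    filter_upwards [hM] with θ hθ
    rw [Real.norm_eq_abs, abs_of_pos (pathLik_pos Y θ t)]
    exact hθ t ht
  -- positivity of z_t
  have hpos : ∀ t ∈ Set.Icc (0:ℝ) 1, 0 < ∫ θ, pathLik Y θ t ∂P := by
    intro t ht
    rw [integral_pos_iff_support_of_nonneg_ae
      (Eventually.of_forall fun θ => (pathLik_pos Y θ t).le) (hInt t ht)]
    have hsupp : Function.support (fun θ : FactorParam p k n => pathLik Y θ t)
        = Set.univ := by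
      ext θ
      simp [Function.mem_support, (pathLik_pos Y θ t).ne']
    rw [hsupp]
    simp
  -- continuity of the numerator
  have hnum : ContinuousOn (fun t : ℝ => ∫ θ, scoreU Y θ t * pathLik Y θ t ∂P)
      (Set.Icc (0:ℝ) 1) := by
    apply continuousOn_of_dominated
      (bound := fun θ => Qbound Y θ * M)
    · intro t ht
      exact ((measurable_scoreU Y t).mul (measurable_pathLik Y t)).aestronglyMeasurable
    · intro t ht
      filter_upwards [hM] with θ hθ
      rw [Real.norm_eq_abs, abs_mul, abs_of_pos (pathLik_pos Y θ t)]
      exact mul_le_mul (abs_scoreU_le Y θ ht) (hθ t ht) (pathLik_pos Y θ t).le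
        (Qbound_nonneg Y θ)
    · exact hQ.mul_const M
    · exact Eventually.of_forall fun θ =>
        ((cont_scoreU_t Y θ).mul (cont_pathLik_t Y θ)).continuousOn
  -- continuity of the denominator
  have hden : ContinuousOn (fun t : ℝ => ∫ θ, pathLik Y θ t ∂P) (Set.Icc (0:ℝ) 1) := by
    apply continuousOn_of_dominated (bound := fun _ => M)
    · intro t ht
      exact (measurable_pathLik Y t).aestronglyMeasurable
    · intro t ht
      filter_upwards [hM] with θ hθ
      rw [Real.norm_eq_abs, abs_of_pos (pathLik_pos Y θ t)]
      exact hθ t ht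
    · exact integrable_const M
    · exact Eventually.of_forall fun θ => (cont_pathLik_t Y θ).continuousOn
  have hcont := hnum.div hden fun t ht => (hpos t ht).ne'
  refine ⟨hpos, hcont, ?_⟩
  have huIcc : Set.uIcc (0:ℝ) 1 = Set.Icc (0:ℝ) 1 := uIcc_of_le zero_le_one
  exact (huIcc ▸ hcont).intervalIntegrable
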